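/- Let X be an integrable real random variable, α ∈ (0,1), and let ψ ∈ [x_α, x^α] where x_α, x^α are the lower and upper α-quantiles. Then -ψ + (1/α)·E[max(ψ - X, 0)] = -(1/α)·E[X·1_{X ≤ ψ}] - ψ·(1 - F_X(ψ)/α), and this value is the same for all ψ in [x_α, x^α]. -/

import Mathlib

open MeasureTheory

lemma key_const {Ω : Type*} [MeasurableSpace Ω] (μ : Measure Ω) [IsProbabilityMeasure μ]
    (X : Ω → ℝ) (hm : Measurable X) (hX : Integrable X μ) (α a b : ℝ) (hab : a ≤ b)
    (hFα : ∀ t ∈ Set.Ioo a b, (μ {ω | X ω ≤ t}).toReal = α) :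
    ∫ ω, max (b - X ω) 0 ∂μ = (∫ ω, max (a - X ω) 0 ∂μ) + α * (b - a) := by
  set ν : Measure ℝ := volume.restrict (Set.Ioc a b) with hν
  haveI : IsFiniteMeasure ν := by
    constructor
    rw [hν, Measure.restrict_apply_univ, Real.volume_Ioc]
    exact ENNReal.ofReal_lt_top
  set g : Ω → ℝ → ℝ := fun ω t => if X ω ≤ t then (1:ℝ) else 0 with hg
  have hS : MeasurableSet {p : Ω × ℝ | X p.1 ≤ p.2} :=
    measurableSet_le (hm.comp measurable_fst) measurable_snd
  have hInt : Integrable (Function.uncurry g) (μ.prod ν) := by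
    have : Function.uncurry g = Set.indicator {p : Ω × ℝ | X p.1 ≤ p.2} (fun _ => (1:ℝ)) := by
      funext p
      simp only [Function.uncurry, hg, Set.indicator_apply, Set.mem_setOf_eq]
    rw [this]
    exact (integrable_const (1:ℝ)).indicator hS
  have swap : ∫ ω, ∫ t, g ω t ∂ν ∂μ = ∫ t, ∫ ω, g ω t ∂μ ∂ν :=
    integral_integral_swap hInt
  -- inner integral over t
  have hinner : ∀ ω, ∫ t, g ω t ∂ν = max b (X ω) - max a (X ω) := by
    intro ω
    have h1 : (fun t => g ω t) = Set.indicator (Set.Ici (X ω)) (fun _ => (1:ℝ)) := by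
      funext t
      simp only [hg, Set.indicator_apply, Set.mem_Ici]
    rw [h1, integral_indicator_const (1:ℝ) measurableSet_Ici, smul_eq_mul, mul_one,
      hν, measureReal_def, Measure.restrict_apply measurableSet_Ici]
    rcases le_or_gt (X ω) a with hxa | hax
    · have : Set.Ici (X ω) ∩ Set.Ioc a b = Set.Ioc a b := by
        apply Set.inter_eq_self_of_subset_right
        intro t ht
        exact le_trans hxa (le_of_lt ht.1)
      rw [this, Real.volume_Ioc, ENNReal.toReal_ofReal (by linarith),
        max_eq_left (le_trans hxa hab), max_eq_left hxa]
    · rcases le_or_gt (X ω) b with hxb | hbx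
      · have : Set.Ici (X ω) ∩ Set.Ioc a b = Set.Icc (X ω) b := by
          ext t
          simp only [Set.mem_inter_iff, Set.mem_Ici, Set.mem_Ioc, Set.mem_Icc]
          constructor
          · rintro ⟨h1, _, h3⟩; exact ⟨h1, h3⟩
          · rintro ⟨h1, h2⟩; exact ⟨h1, lt_of_lt_of_le hax h1, h2⟩
        rw [this, Real.volume_Icc, ENNReal.toReal_ofReal (by linarith),
          max_eq_left hxb, max_eq_right (le_of_lt hax)]
      · have : Set.Ici (X ω) ∩ Set.Ioc a b = ∅ := by
          ext t
          simp only [Set.mem_inter_iff, Set.mem_Ici, Set.mem_Ioc, Set.mem_empty_iff_false,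
            iff_false, not_and]
          intro h1 _
          intro h3
          linarith
        rw [this, measure_empty, ENNReal.toReal_zero,
          max_eq_right (le_of_lt hbx), max_eq_right (le_of_lt (lt_of_le_of_lt hab hbx))]
        ring
  -- inner integral over ω
  have hinner2 : ∀ t, ∫ ω, g ω t ∂μ = (μ {ω | X ω ≤ t}).toReal := by
    intro t
    have h1 : (fun ω => g ω t) = Set.indicator {ω | X ω ≤ t} (fun _ => (1:ℝ)) := by
      funext ω
      simp only [hg, Set.indicator_apply, Set.mem_setOf_eq]
    rw [h1, integral_indicator_const (1:ℝ) (measurableSet_le hm measurable_const : MeasurableSet {ω | X ω ≤ t}), smul_eq_mul, mul_one, measureReal_def]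
  have hRHS : ∫ t, ∫ ω, g ω t ∂μ ∂ν = α * (b - a) := by
    simp only [hinner2]
    rw [hν]
    rw [show (∫ t in Set.Ioc a b, (μ {ω | X ω ≤ t}).toReal) =
        ∫ t in Set.Ioo a b, (μ {ω | X ω ≤ t}).toReal from
      integral_Ioc_eq_integral_Ioo]
    rw [setIntegral_congr_fun measurableSet_Ioo (fun t ht => hFα t ht)]
    rw [setIntegral_const, measureReal_def, Real.volume_Ioo, ENNReal.toReal_ofReal (by linarith), smul_eq_mul]
    ring
  have hLHS : ∫ ω, ∫ t, g ω t ∂ν ∂μ = ∫ ω, (max b (X ω) - max a (X ω)) ∂μ := by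
    exact integral_congr_ae (Filter.Eventually.of_forall fun ω => hinner ω)
  have hmaxdiff : ∫ ω, (max b (X ω) - max a (X ω)) ∂μ = α * (b - a) := by
    rw [← hLHS, swap, hRHS]
  have ib : Integrable (fun ω => max (b - X ω) 0) μ := ((integrable_const b).sub hX).pos_part
  have ia : Integrable (fun ω => max (a - X ω) 0) μ := ((integrable_const a).sub hX).pos_part
  have hpt : ∀ c x : ℝ, max (c - x) 0 = max c x - x := by
    intro c x
    rw [← sub_self x, max_sub_sub_right]
  have hdiff : ∫ ω, max (b - X ω) 0 ∂μ - ∫ ω, max (a - X ω) 0 ∂μ = α * (b - a) := by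
    rw [← integral_sub ib ia, ← hmaxdiff]
    apply integral_congr_ae (Filter.Eventually.of_forall fun ω => ?_)
    rw [hpt, hpt]
    ring
  linarith

theorem stmt_4_aux {Ω : Type*} [MeasurableSpace Ω] (μ : Measure Ω) [IsProbabilityMeasure μ]
    (X : Ω → ℝ) (hX : Integrable X μ) (hm : Measurable X) (α : ℝ) (hα : α ∈ Set.Ioo (0 : ℝ) 1)
    (F : ℝ → ℝ) (hF : ∀ x, F x = (μ {ω | X ω ≤ x}).toReal)
    (xlow xup : ℝ) (hxlow : xlow = sInf {x | α ≤ F x}) (hxup : xup = sInf {x | α < F x})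
    (Γ : ℝ → ℝ) (hΓ : ∀ ψ', Γ ψ' = -ψ' + (1 / α) * ∫ ω, max (ψ' - X ω) 0 ∂μ)
    (ψ : ℝ) (hψ : ψ ∈ Set.Icc xlow xup) :
    (-ψ + (1 / α) * ∫ ω, max (ψ - X ω) 0 ∂μ
        = -(1 / α) * (∫ ω, (if X ω ≤ ψ then X ω else 0) ∂μ) - ψ * (1 - F ψ / α)) ∧
    (∀ ψ' ∈ Set.Icc xlow xup, Γ ψ = Γ ψ') := by
  have hα0 : (0:ℝ) < α := hα.1
  have hα1 : α < 1 := hα.2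
  have hαne : α ≠ 0 := ne_of_gt hα0
  -- monotonicity of F
  have hmono : Monotone F := by
    intro x y hxy
    rw [hF, hF]
    exact ENNReal.toReal_mono (measure_ne_top μ _)
      (measure_mono fun ω (hw : X ω ≤ x) => le_trans hw hxy)
  -- S nonempty
  set S := {x | α ≤ F x} with hSdef
  have hS_ne : S.Nonempty := by
    have hmonoset : Monotone (fun n : ℕ => {ω | X ω ≤ (n:ℝ)}) := by
      intro m n hmn ω (hw : X ω ≤ (m:ℝ))
      exact le_trans hw (Nat.cast_le.mpr hmn)
    have hunion : (⋃ n : ℕ, {ω | X ω ≤ (n:ℝ)}) = Set.univ := by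
      ext ω
      simp only [Set.mem_iUnion, Set.mem_setOf_eq, Set.mem_univ, iff_true]
      exact exists_nat_ge (X ω)
    have htend : Filter.Tendsto (fun n : ℕ => μ {ω | X ω ≤ (n:ℝ)}) Filter.atTop
        (nhds (μ Set.univ)) := by
      have := tendsto_measure_iUnion_atTop (μ := μ) hmonoset
      rwa [hunion] at this
    rw [measure_univ] at htend
    have htendR : Filter.Tendsto (fun n : ℕ => F (n:ℝ)) Filter.atTop (nhds 1) := by
      have h2 := (ENNReal.tendsto_toReal (by simp : (1:ENNReal) ≠ ⊤)).comp htend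
      simpa [Function.comp_def, hF] using h2
    have hev : ∀ᶠ n : ℕ in Filter.atTop, α < F (n:ℝ) :=
      htendR.eventually (eventually_gt_nhds hα1)
    obtain ⟨n, hn⟩ := hev.exists
    exact ⟨(n:ℝ), le_of_lt hn⟩
  -- S bounded below
  have hS_bdd : BddBelow S := by
    have hanti : Antitone (fun n : ℕ => {ω | X ω ≤ -(n:ℝ)}) := by
      intro m n hmn ω (hw : X ω ≤ -(n:ℝ))
      exact le_trans hw (by simpa using hmn)
    have hinter : (⋂ n : ℕ, {ω | X ω ≤ -(n:ℝ)}) = ∅ := by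
      ext ω
      simp only [Set.mem_iInter, Set.mem_setOf_eq, Set.mem_empty_iff_false, iff_false, not_forall]
      obtain ⟨n, hn⟩ := exists_nat_gt (-X ω)
      exact ⟨n, by push_neg; linarith⟩
    have htend : Filter.Tendsto (fun n : ℕ => μ {ω | X ω ≤ -(n:ℝ)}) Filter.atTop
        (nhds (μ (⋂ n : ℕ, {ω | X ω ≤ -(n:ℝ)}))) := by
      apply tendsto_measure_iInter_atTop
      · exact fun n => (measurableSet_le hm measurable_const).nullMeasurableSet
      · exact hanti
      · exact ⟨0, measure_ne_top μ _⟩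
    rw [hinter, measure_empty] at htend
    have htendR : Filter.Tendsto (fun n : ℕ => F (-(n:ℝ))) Filter.atTop (nhds 0) := by
      have h2 := (ENNReal.tendsto_toReal (by simp : (0:ENNReal) ≠ ⊤)).comp htend
      simpa [Function.comp_def, hF] using h2
    have hev : ∀ᶠ n : ℕ in Filter.atTop, F (-(n:ℝ)) < α :=
      htendR.eventually (eventually_lt_nhds hα0)
    obtain ⟨n, hn⟩ := hev.exists
    refine ⟨-(n:ℝ), fun x hx => ?_⟩
    by_contra h
    push_neg at h
    have : F x ≤ F (-(n:ℝ)) := hmono (le_of_lt h)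
    have : α ≤ F (-(n:ℝ)) := le_trans hx this
    linarith
  -- right continuity at xlow : α ≤ F xlow
  have hFlow : α ≤ F xlow := by
    have hkey : ∀ n : ℕ, α ≤ F (xlow + 1 / ((n:ℝ) + 1)) := by
      intro n
      have hpos : (0:ℝ) < 1 / ((n:ℝ) + 1) := by positivity
      have : sInf S < xlow + 1 / ((n:ℝ) + 1) := by rw [← hxlow]; linarith
      obtain ⟨s, hsS, hs⟩ := (csInf_lt_iff hS_bdd hS_ne).mp this
      exact le_trans hsS (hmono (le_of_lt hs))
    have hanti : Antitone (fun n : ℕ => {ω | X ω ≤ xlow + 1 / ((n:ℝ) + 1)}) := by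
      intro m n hmn ω (hw : X ω ≤ xlow + 1 / ((n:ℝ) + 1))
      refine le_trans hw ?_
      have h1 : (m:ℝ) + 1 ≤ (n:ℝ) + 1 := by exact_mod_cast Nat.succ_le_succ hmn
      have h2 : 1 / ((n:ℝ) + 1) ≤ 1 / ((m:ℝ) + 1) :=
        one_div_le_one_div_of_le (by positivity) h1
      linarith
    have hinter : (⋂ n : ℕ, {ω | X ω ≤ xlow + 1 / ((n:ℝ) + 1)}) = {ω | X ω ≤ xlow} := by
      ext ω
      simp only [Set.mem_iInter, Set.mem_setOf_eq]
      constructor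
      · intro h
        by_contra hc
        push_neg at hc
        obtain ⟨n, hn⟩ := exists_nat_one_div_lt (by linarith : (0:ℝ) < X ω - xlow)
        have := h n
        linarith
      · intro h n
        have hpos : (0:ℝ) < 1 / ((n:ℝ) + 1) := by positivity
        linarith
    have htend : Filter.Tendsto (fun n : ℕ => μ {ω | X ω ≤ xlow + 1 / ((n:ℝ) + 1)}) Filter.atTop
        (nhds (μ {ω | X ω ≤ xlow})) := by
      have := tendsto_measure_iInter_atTop (μ := μ)
        (fun n => (measurableSet_le hm measurable_const).nullMeasurableSet)
        hanti ⟨0, measure_ne_top μ _⟩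
      rwa [hinter] at this
    have htendR : Filter.Tendsto (fun n : ℕ => F (xlow + 1 / ((n:ℝ) + 1))) Filter.atTop
        (nhds (F xlow)) := by
      have h2 := (ENNReal.tendsto_toReal (measure_ne_top μ _)).comp htend
      simpa [Function.comp_def, hF] using h2
    exact ge_of_tendsto' htendR hkey
  -- F = α on [xlow, xup)
  have hFt : ∀ t, xlow ≤ t → t < xup → F t = α := by
    intro t h1 h2
    refine le_antisymm ?_ (le_trans hFlow (hmono h1))
    by_contra h
    push_neg at h
    have ht : t ∈ {x | α < F x} := h
    have : xup ≤ t := by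
      rw [hxup]
      exact csInf_le (hS_bdd.mono (fun x (hx : α < F x) => le_of_lt hx)) ht
    linarith
  -- constancy of Γ
  have hΓconst : ∀ c ∈ Set.Icc xlow xup, Γ c = Γ xlow := by
    intro c hc
    have hFα : ∀ t ∈ Set.Ioo xlow c, (μ {ω | X ω ≤ t}).toReal = α := by
      intro t ht
      rw [← hF]
      exact hFt t (le_of_lt ht.1) (lt_of_lt_of_le ht.2 hc.2)
    have hkey := key_const μ X hm hX α xlow c hc.1 hFα
    rw [hΓ, hΓ, hkey]
    field_simp
    ring
  constructor
  · have hA : MeasurableSet {ω | X ω ≤ ψ} := measurableSet_le hm measurable_const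
    have e1 : ∫ ω, max (ψ - X ω) 0 ∂μ
        = ∫ ω, ((if X ω ≤ ψ then ψ else 0) - (if X ω ≤ ψ then X ω else 0)) ∂μ := by
      apply integral_congr_ae (Filter.Eventually.of_forall fun ω => ?_)
      by_cases h : X ω ≤ ψ
      · rw [if_pos h, if_pos h, max_eq_left (by linarith : (0:ℝ) ≤ ψ - X ω)]
      · push_neg at h
        rw [if_neg (not_le.mpr h), if_neg (not_le.mpr h),
          max_eq_right (by linarith : ψ - X ω ≤ 0)]
        ring
    have i1 : Integrable (fun ω => if X ω ≤ ψ then ψ else 0) μ := by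
      have h : (fun ω => if X ω ≤ ψ then ψ else 0)
          = Set.indicator {ω | X ω ≤ ψ} (fun _ => ψ) := by
        funext ω; simp [Set.indicator_apply, Set.mem_setOf_eq]
      rw [h]; exact (integrable_const ψ).indicator hA
    have i2 : Integrable (fun ω => if X ω ≤ ψ then X ω else 0) μ := by
      have h : (fun ω => if X ω ≤ ψ then X ω else 0)
          = Set.indicator {ω | X ω ≤ ψ} X := by
        funext ω; simp [Set.indicator_apply, Set.mem_setOf_eq]
      rw [h]; exact hX.indicator hA
    have e2 : ∫ ω, (if X ω ≤ ψ then ψ else 0) ∂μ = (μ {ω | X ω ≤ ψ}).toReal * ψ := by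
      have h : (fun ω => if X ω ≤ ψ then ψ else 0)
          = Set.indicator {ω | X ω ≤ ψ} (fun _ => ψ) := by
        funext ω; simp [Set.indicator_apply, Set.mem_setOf_eq]
      rw [h, integral_indicator_const ψ hA, smul_eq_mul, measureReal_def]
    rw [e1, integral_sub i1 i2, e2, hF]
    field_simp
    ring
  · intro ψ' hψ'
    rw [hΓconst ψ hψ, hΓconst ψ' hψ']

/-- For ψ between the lower and upper α-quantiles, the PRU function has the explicit
form -(1/α)E[X·1_{X≤ψ}] - ψ(1 - F(ψ)/α), and its value is constant on that interval. -/
theorem stmt_4 {Ω : Type*} [MeasurableSpace Ω] (μ : Measure Ω) [IsProbabilityMeasure μ]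
    (X : Ω → ℝ) (hX : Integrable X μ) (α : ℝ) (hα : α ∈ Set.Ioo (0 : ℝ) 1)
    (F : ℝ → ℝ) (hF : ∀ x, F x = (μ {ω | X ω ≤ x}).toReal)
    (xlow xup : ℝ) (hxlow : xlow = sInf {x | α ≤ F x}) (hxup : xup = sInf {x | α < F x})
    (Γ : ℝ → ℝ) (hΓ : ∀ ψ', Γ ψ' = -ψ' + (1 / α) * ∫ ω, max (ψ' - X ω) 0 ∂μ)
    (ψ : ℝ) (hψ : ψ ∈ Set.Icc xlow xup) :
    (-ψ + (1 / α) * ∫ ω, max (ψ - X ω) 0 ∂μ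
        = -(1 / α) * (∫ ω, (if X ω ≤ ψ then X ω else 0) ∂μ) - ψ * (1 - F ψ / α)) ∧
    (∀ ψ' ∈ Set.Icc xlow xup, Γ ψ = Γ ψ') := by
  have hsm := hX.aestronglyMeasurable
  set X' : Ω → ℝ := hsm.mk X with hX'def
  have hm' : Measurable X' := hsm.measurable_mk
  have hXX' : X =ᵐ[μ] X' := hsm.ae_eq_mk
  have hX' : Integrable X' μ := hX.congr hXX'
  have hμeq : ∀ x, μ {ω | X ω ≤ x} = μ {ω | X' ω ≤ x} := by
    intro x
    apply measure_congr
    filter_upwards [hXX'] with ω h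
    show (X ω ≤ x) = (X' ω ≤ x)
    rw [h]
  have hF' : ∀ x, F x = (μ {ω | X' ω ≤ x}).toReal := fun x => by rw [hF, hμeq]
  have hmaxeq : ∀ c : ℝ, (∫ ω, max (c - X ω) 0 ∂μ) = ∫ ω, max (c - X' ω) 0 ∂μ := by
    intro c
    apply integral_congr_ae
    filter_upwards [hXX'] with ω h
    rw [h]
  have hΓ' : ∀ ψ', Γ ψ' = -ψ' + (1 / α) * ∫ ω, max (ψ' - X' ω) 0 ∂μ := by
    intro ψ'
    rw [hΓ, hmaxeq]
  obtain ⟨h1, h2⟩ := stmt_4_aux μ X' hX' hm' α hα F hF' xlow xup hxlow hxup Γ hΓ' ψ hψ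
  refine ⟨?_, h2⟩
  have e2 : (∫ ω, (if X ω ≤ ψ then X ω else 0) ∂μ)
      = ∫ ω, (if X' ω ≤ ψ then X' ω else 0) ∂μ := by
    apply integral_congr_ae
    filter_upwards [hXX'] with ω h
    rw [h]
  rw [hmaxeq, e2]
  exact h1
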